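/- Let n ≥ 2 and 1 ≤ k ≤ n−1, and let U ⊆ S^{n×n} be an open convex set such that (a) aM ∈ U for every M ∈ U and every constant a > 0, and (b) every N ∈ S^{n×n} whose eigenvalues consist of 0 with multiplicity k and 1 with multiplicity n−k belongs to U. Then U satisfies Property P_k. -/

import Mathlib

open Filter Metric Set MeasureTheory Topology

attribute [local instance] Matrix.normedAddCommGroup Matrix.normedSpace

noncomputable section

/-- The Hessian matrix `∇²u(x)` of `u : ℝⁿ → ℝ` at `x`. -/
def hessianMatrix (n : ℕ) (u : EuclideanSpace ℝ (Fin n) → ℝ)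
    (x : EuclideanSpace ℝ (Fin n)) : Matrix (Fin n) (Fin n) ℝ :=
  fun i j => iteratedFDeriv ℝ 2 u x ![EuclideanSpace.single i 1, EuclideanSpace.single j 1]

/-- The eigenvalues `λ₁(M) ≤ ⋯ ≤ λₙ(M)` of a real symmetric matrix `M`, in
nondecreasing order (junk value if `M` is not symmetric): `sortedEig n M i = λ_{i+1}(M)`. -/
def sortedEig (n : ℕ) (M : Matrix (Fin n) (Fin n) ℝ) : Fin n → ℝ :=
  if hM : M.IsHermitian then hM.eigenvalues ∘ Tuple.sort hM.eigenvalues else 0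

/-- `λ₁(M) + ⋯ + λ_k(M)`, the sum of the `k` smallest eigenvalues of `M`. -/
def sumLowEig (n k : ℕ) (M : Matrix (Fin n) (Fin n) ℝ) : ℝ :=
  ∑ i ∈ Finset.univ.filter fun i : Fin n => (i : ℕ) < k, sortedEig n M i

/-- Condition (★) with radius `rbar`: for every vector `V`, the function
`w(x) = u(x) + V·x` satisfies `inf_{B_r ∖ {0}} w = min_{∂B_r} w` for all `0 < r < rbar`
(the minimum on the sphere is attained and equals the infimum over the punctured ball). -/
def StarCond (n : ℕ) (u : EuclideanSpace ℝ (Fin n) → ℝ) (rbar : ℝ) : Prop :=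
  ∀ V : EuclideanSpace ℝ (Fin n), ∀ r : ℝ, 0 < r → r < rbar →
    IsLeast ((fun x => u x + (inner ℝ V x : ℝ)) '' sphere (0 : EuclideanSpace ℝ (Fin n)) r)
      (sInf ((fun x => u x + (inner ℝ V x : ℝ)) '' (ball (0 : EuclideanSpace ℝ (Fin n)) r \ {0})))

/-- The matrix `(∂G/∂M_ij)` of partial derivatives of a function `G` of a matrix variable. -/
def derivMatrix (n : ℕ) (G : Matrix (Fin n) (Fin n) ℝ → ℝ) (M : Matrix (Fin n) (Fin n) ℝ) :
    Matrix (Fin n) (Fin n) ℝ :=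
  fun i j => fderiv ℝ G M (Matrix.single i j 1)

/-- Property P_k: for every `C > 0` there are `δ̄, ε̄ > 0` such that for all `0 < ε < ε̄`,
every symmetric `M` in the closure of `U` with `M ≤ C·I`, and every symmetric `N` whose
eigenvalues consist of `-δ̄` with multiplicity `k` and `1` with multiplicity `n - k`,
one has `M + ε N ∈ U`. -/
def PropertyPk (n k : ℕ) (U : Set (Matrix (Fin n) (Fin n) ℝ)) : Prop :=
  ∀ C : ℝ, 0 < C → ∃ δb : ℝ, 0 < δb ∧ ∃ εb : ℝ, 0 < εb ∧
    ∀ ε : ℝ, 0 < ε → ε < εb →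
      ∀ M ∈ closure U, M.IsHermitian →
        ((C • (1 : Matrix (Fin n) (Fin n) ℝ)) - M).PosSemidef →
        ∀ N : Matrix (Fin n) (Fin n) ℝ, N.IsHermitian →
          (∀ i : Fin n, sortedEig n N i = if (i : ℕ) < k then -δb else 1) →
          M + ε • N ∈ U

namespace Stmt19Aux

variable {n : ℕ}

lemma sortedEig_def {A : Matrix (Fin n) (Fin n) ℝ} (hA : A.IsHermitian) :
    sortedEig n A = hA.eigenvalues ∘ Tuple.sort hA.eigenvalues := by
  rw [sortedEig, dif_pos hA]

lemma herm_conj_diag {A : Matrix (Fin n) (Fin n) ℝ} (hA : A.IsHermitian) :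
    star (hA.eigenvectorUnitary : Matrix (Fin n) (Fin n) ℝ) * A *
      (hA.eigenvectorUnitary : Matrix (Fin n) (Fin n) ℝ) = Matrix.diagonal hA.eigenvalues := by
  simpa [RCLike.ofReal_real_eq_id] using hA.conjStarAlgAut_star_eigenvectorUnitary

lemma herm_eq_conj {A : Matrix (Fin n) (Fin n) ℝ} (hA : A.IsHermitian) :
    A = (hA.eigenvectorUnitary : Matrix (Fin n) (Fin n) ℝ) * Matrix.diagonal hA.eigenvalues *
      star (hA.eigenvectorUnitary : Matrix (Fin n) (Fin n) ℝ) := by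
  simpa [RCLike.ofReal_real_eq_id] using hA.spectral_theorem

lemma herm_trace {A : Matrix (Fin n) (Fin n) ℝ} (hA : A.IsHermitian) :
    A.trace = ∑ i, hA.eigenvalues i := by
  conv_lhs => rw [herm_eq_conj hA]
  rw [Matrix.trace_mul_cycle,
    Matrix.mem_unitaryGroup_iff'.mp hA.eigenvectorUnitary.2, one_mul, Matrix.trace_diagonal]

lemma herm_quad_eq_zero {A : Matrix (Fin n) (Fin n) ℝ} (hA : A.IsHermitian) (a b : ℝ)
    (h : ∀ i, (hA.eigenvalues i - a) * (hA.eigenvalues i - b) = 0) :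
    (A - a • 1) * (A - b • 1) = 0 := by
  set V := (hA.eigenvectorUnitary : Matrix (Fin n) (Fin n) ℝ) with hVdef
  have hV1 : V * star V = 1 := Matrix.mem_unitaryGroup_iff.mp hA.eigenvectorUnitary.2
  have hV2 : star V * V = 1 := Matrix.mem_unitaryGroup_iff'.mp hA.eigenvectorUnitary.2
  have key : ∀ c : ℝ, A - c • 1 = V * Matrix.diagonal (fun i => hA.eigenvalues i - c) * star V := by
    intro c
    have h1 : (Matrix.diagonal (fun i => hA.eigenvalues i - c) : Matrix (Fin n) (Fin n) ℝ)
        = Matrix.diagonal hA.eigenvalues - c • 1 := by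
      ext i j
      by_cases hij : i = j
      · subst hij
        simp [Matrix.diagonal_apply_eq, Matrix.one_apply_eq]
      · simp [Matrix.diagonal_apply_ne _ hij, Matrix.one_apply_ne hij]
    rw [h1, Matrix.mul_sub, Matrix.sub_mul, ← herm_eq_conj hA]
    congr 1
    rw [Matrix.mul_smul, Matrix.mul_one, Matrix.smul_mul, hV1]
  have conjmul : ∀ X Y : Matrix (Fin n) (Fin n) ℝ,
      (V * X * star V) * (V * Y * star V) = V * (X * Y) * star V := by
    intro X Y
    calc (V * X * star V) * (V * Y * star V) = V * X * (star V * V) * Y * star V := by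
          noncomm_ring
      _ = V * (X * Y) * star V := by rw [hV2, mul_one, mul_assoc V X Y]
  have hD : Matrix.diagonal (fun i => hA.eigenvalues i - a) *
      Matrix.diagonal (fun i => hA.eigenvalues i - b) = 0 := by
    rw [Matrix.diagonal_mul_diagonal]
    have : (fun i => (hA.eigenvalues i - a) * (hA.eigenvalues i - b)) = fun _ => (0:ℝ) :=
      funext h
    rw [this, Matrix.diagonal_zero]
  rw [key a, key b, conjmul, hD, Matrix.mul_zero, Matrix.zero_mul]

lemma eig_idem {A : Matrix (Fin n) (Fin n) ℝ} (hA : A.IsHermitian) (h : A * A = A) (i : Fin n) :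
    hA.eigenvalues i = 0 ∨ hA.eigenvalues i = 1 := by
  set V := (hA.eigenvectorUnitary : Matrix (Fin n) (Fin n) ℝ) with hVdef
  have hV1 : V * star V = 1 := Matrix.mem_unitaryGroup_iff.mp hA.eigenvectorUnitary.2
  have hdiag := herm_conj_diag hA
  have hDD : Matrix.diagonal hA.eigenvalues * Matrix.diagonal hA.eigenvalues
      = Matrix.diagonal hA.eigenvalues := by
    rw [← hdiag]
    calc (star V * A * V) * (star V * A * V) = star V * (A * (V * star V) * A) * V := by
          noncomm_ring
      _ = star V * A * V := by rw [hV1, mul_one, h]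
  have h2 : (Matrix.diagonal hA.eigenvalues * Matrix.diagonal hA.eigenvalues) i i
      = Matrix.diagonal hA.eigenvalues i i := by rw [hDD]
  rw [Matrix.diagonal_mul_diagonal] at h2
  simp only [Matrix.diagonal_apply_eq] at h2
  have h3 : hA.eigenvalues i * (hA.eigenvalues i - 1) = 0 := by linear_combination h2
  rcases mul_eq_zero.mp h3 with h4 | h4
  · exact Or.inl h4
  · exact Or.inr (by linarith)

lemma sum_ite_fin (n k : ℕ) (hk : k ≤ n) (a b : ℝ) :
    (∑ i : Fin n, if (i : ℕ) < k then a else b) = k * a + ((n - k : ℕ) : ℝ) * b := by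
  rw [Fin.sum_univ_eq_sum_range (fun i => if i < k then a else b) n, Finset.range_eq_Ico,
    ← Finset.sum_Ico_consecutive _ (Nat.zero_le k) hk]
  have h1 : (∑ i ∈ Finset.Ico 0 k, if i < k then a else b) = k * a := by
    rw [Finset.sum_congr rfl (fun i hi => if_pos (Finset.mem_Ico.mp hi).2)]
    simp [Nat.card_Ico, mul_comm]
  have h2 : (∑ i ∈ Finset.Ico k n, if i < k then a else b) = ((n - k : ℕ) : ℝ) * b := by
    rw [Finset.sum_congr rfl (fun i hi => if_neg (not_lt.mpr (Finset.mem_Ico.mp hi).1))]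
    simp [Nat.card_Ico, mul_comm]
  rw [h1, h2]

lemma pattern_lemma {n k : ℕ} (hk : k ≤ n) (g : Fin n → ℝ) (hmono : Monotone g)
    (hval : ∀ i, g i = 0 ∨ g i = 1) (hsum : (∑ i, g i) = ((n - k : ℕ) : ℝ)) :
    ∀ i : Fin n, g i = if (i : ℕ) < k then 0 else 1 := by
  intro i
  by_cases hc : (i : ℕ) < k
  · rw [if_pos hc]
    by_contra h0
    have hgi : g i = 1 := (hval i).resolve_left h0
    have hone : ∀ j ∈ Finset.Ici i, g j = 1 := by
      intro j hj
      rcases hval j with h | h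
      · exfalso; have := hmono (Finset.mem_Ici.mp hj); rw [hgi, h] at this; linarith
      · exact h
    have hge : ((n - (i : ℕ) : ℕ) : ℝ) ≤ ∑ j, g j := by
      calc ((n - (i : ℕ) : ℕ) : ℝ) = (Finset.Ici i).card • (1 : ℝ) := by
            rw [Fin.card_Ici]; simp
        _ ≤ ∑ j ∈ Finset.Ici i, g j :=
            Finset.card_nsmul_le_sum _ _ _ (fun j hj => (hone j hj).ge)
        _ ≤ ∑ j, g j := by
            refine Finset.sum_le_sum_of_subset_of_nonneg (Finset.subset_univ _) ?_
            intro j _ _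
            rcases hval j with h | h <;> rw [h] <;> norm_num
    rw [hsum] at hge
    have := Nat.cast_le (α := ℝ).mp hge
    omega
  · rw [if_neg hc]
    by_contra h0
    have hgi : g i = 0 := (hval i).resolve_right h0
    have hzero : ∀ j ∈ Finset.Iic i, g j = 0 := by
      intro j hj
      rcases hval j with h | h
      · exact h
      · exfalso; have := hmono (Finset.mem_Iic.mp hj); rw [hgi, h] at this; linarith
    have hle : (∑ j, g j) ≤ ((n - ((i : ℕ) + 1) : ℕ) : ℝ) := by
      calc (∑ j, g j) = ∑ j ∈ Finset.univ \ Finset.Iic i, g j := by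
            refine (Finset.sum_subset (Finset.subset_univ _) ?_).symm
            intro j _ hj
            simp only [Finset.mem_sdiff, Finset.mem_univ, true_and, not_not] at hj
            exact hzero j hj
        _ ≤ (Finset.univ \ Finset.Iic i).card • (1 : ℝ) := by
            refine Finset.sum_le_card_nsmul _ _ _ ?_
            intro j _
            rcases hval j with h | h <;> rw [h] <;> norm_num
        _ = ((n - ((i : ℕ) + 1) : ℕ) : ℝ) := by
            rw [Finset.card_sdiff_of_subset (Finset.subset_univ _), Fin.card_Iic, Finset.card_univ,
              Fintype.card_fin]
            simp
    rw [hsum] at hle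
    have := Nat.cast_le (α := ℝ).mp hle
    have hin : (i : ℕ) < n := i.isLt
    omega

end Stmt19Aux

/-- Remark 1.3 (ii): an open convex cone-like set `U` containing all
symmetric matrices with eigenvalues `0` (multiplicity `k`) and `1` (multiplicity `n - k`)
satisfies Property P_k. -/
theorem stmt_19 (n k : ℕ) (hn : 2 ≤ n) (hk1 : 1 ≤ k) (hk2 : k ≤ n - 1)
    (U : Set (Matrix (Fin n) (Fin n) ℝ)) (hUopen : IsOpen U) (hUconv : Convex ℝ U)
    (hscale : ∀ M ∈ U, ∀ a : ℝ, 0 < a → a • M ∈ U)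
    (hNmem : ∀ N : Matrix (Fin n) (Fin n) ℝ, N.IsHermitian →
      (∀ i : Fin n, sortedEig n N i = if (i : ℕ) < k then 0 else 1) → N ∈ U) :
    PropertyPk n k U := by
  classical
  have hkn : k ≤ n := le_trans hk2 (Nat.sub_le n 1)
  set K : Set (Matrix (Fin n) (Fin n) ℝ) :=
    {P | P.IsHermitian ∧ P * P = P ∧ P.trace = ((n - k : ℕ) : ℝ)} with hKdef
  have hKsubU : K ⊆ U := by
    rintro P ⟨hP, hidem, htr⟩
    refine hNmem P hP ?_
    have hsorted := Stmt19Aux.sortedEig_def hP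
    have hmono : Monotone (sortedEig n P) := by
      rw [hsorted]; exact Tuple.monotone_sort _
    have hval : ∀ i, sortedEig n P i = 0 ∨ sortedEig n P i = 1 := by
      rw [hsorted]; exact fun i => Stmt19Aux.eig_idem hP hidem _
    have hsum : (∑ i, sortedEig n P i) = ((n - k : ℕ) : ℝ) := by
      rw [hsorted]
      rw [show (∑ i, (hP.eigenvalues ∘ Tuple.sort hP.eigenvalues) i) = ∑ i, hP.eigenvalues i from
        Equiv.sum_comp _ _]
      rw [← Stmt19Aux.herm_trace hP, htr]
    exact Stmt19Aux.pattern_lemma hkn _ hmono hval hsum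
  have hKclosed : IsClosed K := by
    have h1 : IsClosed {P : Matrix (Fin n) (Fin n) ℝ | P.conjTranspose = P} :=
      isClosed_eq (continuous_id.matrix_conjTranspose) continuous_id
    have h2 : IsClosed {P : Matrix (Fin n) (Fin n) ℝ | P * P = P} :=
      isClosed_eq (continuous_id.matrix_mul continuous_id) continuous_id
    have h3 : IsClosed {P : Matrix (Fin n) (Fin n) ℝ | P.trace = ((n - k : ℕ) : ℝ)} :=
      isClosed_eq (continuous_id.matrix_trace) continuous_const
    exact h1.inter (h2.inter h3)
  have hKbdd : K ⊆ Metric.closedBall 0 1 := by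
    rintro P ⟨hP, hidem, -⟩
    rw [Metric.mem_closedBall, dist_zero_right]
    refine (Matrix.norm_le_iff zero_le_one).mpr ?_
    intro i j
    have hsym : ∀ a b : Fin n, P a b = P b a := by
      intro a b
      conv_lhs => rw [← hP.eq]
      simp [Matrix.conjTranspose_apply]
    have hPdiag : ∀ a, P a a = ∑ l, P a l * P a l := by
      intro a
      conv_lhs => rw [← hidem]
      rw [Matrix.mul_apply]
      exact Finset.sum_congr rfl fun l _ => by rw [hsym l a]
    have hij_sq : ∀ a b, P a b * P a b ≤ P a a := by
      intro a b
      rw [hPdiag a]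
      exact Finset.single_le_sum (f := fun l => P a l * P a l)
        (fun l _ => mul_self_nonneg _) (Finset.mem_univ b)
    have hii_le : P i i ≤ 1 := by nlinarith [hij_sq i i]
    have := hij_sq i j
    rw [Real.norm_eq_abs]
    exact abs_le.mpr ⟨by nlinarith, by nlinarith⟩
  have hKcpt : IsCompact K :=
    (isCompact_closedBall (0 : Matrix (Fin n) (Fin n) ℝ) 1).of_isClosed_subset hKclosed hKbdd
  obtain ⟨η, hηpos, hthick⟩ := hKcpt.exists_thickening_subset_open hUopen hKsubU
  set δ : ℝ := min (η/4) (1/2) with hδdef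
  have hδpos : 0 < δ := lt_min (by positivity) (by norm_num)
  have hδhalf : δ ≤ 1/2 := min_le_right _ _
  have hδη : δ ≤ η/4 := min_le_left _ _
  have hδ1 : δ ≤ 1 := by linarith
  have main : ∀ N : Matrix (Fin n) (Fin n) ℝ, N.IsHermitian →
      (∀ i : Fin n, sortedEig n N i = if (i : ℕ) < k then -δ else 1) → N ∈ U := by
    intro N hN hNsort
    have hsortN := Stmt19Aux.sortedEig_def hN
    have heig : ∀ j, hN.eigenvalues j = -δ ∨ hN.eigenvalues j = 1 := by
      intro j
      have h1 := hNsort ((Tuple.sort hN.eigenvalues)⁻¹ j)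
      rw [hsortN] at h1
      simp only [Function.comp_apply, show ∀ x, (Tuple.sort hN.eigenvalues) ((Tuple.sort hN.eigenvalues)⁻¹ x) = x from
        fun x => (Tuple.sort hN.eigenvalues).apply_symm_apply x] at h1
      rcases lt_or_ge (((Tuple.sort hN.eigenvalues)⁻¹ j : Fin n) : ℕ) k with hc | hc
      · left; rwa [if_pos hc] at h1
      · right; rwa [if_neg (not_lt.mpr hc)] at h1
    have hquad := Stmt19Aux.herm_quad_eq_zero hN (-δ) 1
      (fun i => by rcases heig i with h | h <;> rw [h] <;> ring)
    have hquad' : (N + δ • (1 : Matrix (Fin n) (Fin n) ℝ)) * (N - 1) = 0 := by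
      have e1 : N - (-δ) • (1 : Matrix (Fin n) (Fin n) ℝ) = N + δ • 1 := by
        rw [neg_smul, sub_neg_eq_add]
      have e2 : N - (1:ℝ) • (1 : Matrix (Fin n) (Fin n) ℝ) = N - 1 := by rw [one_smul]
      rw [e1, e2] at hquad
      exact hquad
    have hAN : (N + δ • (1 : Matrix (Fin n) (Fin n) ℝ)) * N = N + δ • 1 := by
      rw [Matrix.mul_sub, Matrix.mul_one] at hquad'
      have := sub_eq_zero.mp hquad'
      exact this
    have hAA : (N + δ • (1 : Matrix (Fin n) (Fin n) ℝ)) * (N + δ • 1)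
        = (1 + δ) • (N + δ • 1) := by
      rw [Matrix.mul_add, hAN, Matrix.mul_smul, Matrix.mul_one, add_smul, one_smul]
    have h1δ : (0:ℝ) < 1 + δ := by linarith
    set P : Matrix (Fin n) (Fin n) ℝ := (1 + δ)⁻¹ • (N + δ • 1) with hPdef
    have hPHerm : P.IsHermitian := by
      show P.conjTranspose = P
      rw [hPdef]
      rw [Matrix.conjTranspose_smul, Matrix.conjTranspose_add, Matrix.conjTranspose_smul,
        Matrix.conjTranspose_one, hN.eq]
      simp
    have hPidem : P * P = P := by
      rw [hPdef, Matrix.smul_mul, Matrix.mul_smul, hAA, smul_smul, smul_smul]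
      congr 1
      field_simp
    have htrN : N.trace = (k:ℝ) * (-δ) + ((n - k : ℕ) : ℝ) * 1 := by
      rw [Stmt19Aux.herm_trace hN,
        ← Equiv.sum_comp (Tuple.sort hN.eigenvalues) hN.eigenvalues]
      have hval : ∀ i : Fin n, hN.eigenvalues (Tuple.sort hN.eigenvalues i)
          = if (i:ℕ) < k then -δ else 1 := by
        intro i
        have := hNsort i
        rwa [hsortN] at this
      rw [Finset.sum_congr rfl (fun i _ => hval i)]
      exact Stmt19Aux.sum_ite_fin n k hkn _ _
    have htrP : P.trace = ((n - k : ℕ) : ℝ) := by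
      rw [hPdef, Matrix.trace_smul, Matrix.trace_add, Matrix.trace_smul, Matrix.trace_one, htrN]
      rw [Nat.cast_sub hkn]
      simp only [smul_eq_mul, Fintype.card_fin]
      field_simp
      ring
    have hPK : P ∈ K := ⟨hPHerm, hPidem, htrP⟩
    have hsymN : ∀ a b, N a b = N b a := by
      intro a b
      conv_lhs => rw [← hN.eq]
      simp [Matrix.conjTranspose_apply]
    have hNN : N * N = N + δ • (1 : Matrix (Fin n) (Fin n) ℝ) - δ • N := by
      have h2 := hAN
      rw [Matrix.add_mul, Matrix.smul_mul, Matrix.one_mul] at h2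
      exact eq_sub_of_add_eq h2
    have hdiagid : ∀ a, (∑ l, N a l * N a l) = (1 - δ) * N a a + δ := by
      intro a
      have h3 : (N * N) a a = (N + δ • (1 : Matrix (Fin n) (Fin n) ℝ) - δ • N) a a := by
        rw [hNN]
      rw [Matrix.mul_apply] at h3
      have h4 : (∑ l, N a l * N l a) = ∑ l, N a l * N a l :=
        Finset.sum_congr rfl fun l _ => by rw [hsymN l a]
      rw [h4] at h3
      rw [h3]
      simp only [Matrix.sub_apply, Matrix.add_apply, Matrix.smul_apply, Matrix.one_apply_eq,
        smul_eq_mul]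
      ring
    have key : ∀ i j, N i j * N i j ≤ (1 - δ) * N i i + δ := by
      intro i j
      rw [← hdiagid i]
      exact Finset.single_le_sum (f := fun l => N i l * N i l)
        (fun l _ => mul_self_nonneg _) (Finset.mem_univ j)
    have hNbdd : ∀ i j, |N i j| ≤ 1 := by
      intro i j
      have hii : N i i ≤ 1 := by nlinarith [key i i]
      have := key i j
      exact abs_le.mpr ⟨by nlinarith, by nlinarith⟩
    have hdistNP : dist N P < η := by
      have hc : 1 - (1 + δ)⁻¹ = (1 + δ)⁻¹ * δ := by field_simp; ring
      have hidNP : N - P = ((1 + δ)⁻¹ * δ) • (N - 1) := by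
        calc N - P = N - ((1 + δ)⁻¹ • N + ((1 + δ)⁻¹ * δ) • (1 : Matrix (Fin n) (Fin n) ℝ)) := by
              rw [hPdef, smul_add, smul_smul]
          _ = (1 - (1 + δ)⁻¹) • N - ((1 + δ)⁻¹ * δ) • (1 : Matrix (Fin n) (Fin n) ℝ) := by
              rw [sub_smul, one_smul]; abel
          _ = ((1 + δ)⁻¹ * δ) • N - ((1 + δ)⁻¹ * δ) • (1 : Matrix (Fin n) (Fin n) ℝ) := by
              rw [hc]
          _ = ((1 + δ)⁻¹ * δ) • (N - 1) := by rw [smul_sub]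
      rw [dist_eq_norm, hidNP, norm_smul]
      have hN1 : ‖N - (1 : Matrix (Fin n) (Fin n) ℝ)‖ ≤ 2 := by
        refine le_trans (norm_sub_le _ _) ?_
        have e1 : ‖N‖ ≤ 1 := (Matrix.norm_le_iff zero_le_one).mpr
          (fun i j => by rw [Real.norm_eq_abs]; exact hNbdd i j)
        have e2 : ‖(1 : Matrix (Fin n) (Fin n) ℝ)‖ ≤ 1 := by
          refine (Matrix.norm_le_iff zero_le_one).mpr ?_
          intro i j
          rw [Matrix.one_apply, Real.norm_eq_abs]
          split <;> simp
        linarith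
      have hinv : (1 + δ)⁻¹ ≤ 1 := by
        rw [inv_le_one_iff₀]
        right; linarith
      have hcoef : ‖(1 + δ)⁻¹ * δ‖ ≤ δ := by
        rw [Real.norm_eq_abs, abs_of_nonneg (by positivity)]
        nlinarith
      calc ‖(1 + δ)⁻¹ * δ‖ * ‖N - (1 : Matrix (Fin n) (Fin n) ℝ)‖ ≤ δ * 2 :=
            mul_le_mul hcoef hN1 (norm_nonneg _) (le_of_lt hδpos)
        _ ≤ (η/4) * 2 := by linarith
        _ < η := by linarith
    exact hthick (Metric.mem_thickening_iff.mpr ⟨P, hPK, hdistNP⟩)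
  intro C hC
  refine ⟨δ, hδpos, 1, one_pos, ?_⟩
  intro ε hε hε1 M hM hMH hMC N hN hNsort
  have hNinU : N ∈ U := main N hN hNsort
  have hεNU : ε • N ∈ U := hscale N hNinU ε hε
  obtain ⟨r, hr, hball⟩ := Metric.isOpen_iff.mp hUopen (ε • N) hεNU
  obtain ⟨M', hM'U, hM'dist⟩ := Metric.mem_closure_iff.mp hM r hr
  have hy' : ε • N + (M - M') ∈ U := by
    apply hball
    rw [Metric.mem_ball, dist_eq_norm]
    have heq : ε • N + (M - M') - ε • N = M - M' := by abel
    rw [heq, ← dist_eq_norm]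
    exact hM'dist
  have hsum : M' + (ε • N + (M - M')) ∈ U := by
    have hmid : (1/2 : ℝ) • M' + (1/2 : ℝ) • (ε • N + (M - M')) ∈ U :=
      hUconv hM'U hy' (by norm_num) (by norm_num) (by norm_num)
    have h2 := hscale _ hmid 2 (by norm_num)
    have heq : (2:ℝ) • ((1/2 : ℝ) • M' + (1/2 : ℝ) • (ε • N + (M - M')))
        = M' + (ε • N + (M - M')) := by
      rw [smul_add, smul_smul, smul_smul]
      norm_num
    rwa [heq] at h2
  have hfinal : M + ε • N = M' + (ε • N + (M - M')) := by abel
  rwa [hfinal]
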